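/- Let α ∈ ℝ^n be irrational with uniform Diophantine exponent ω̂_α, and let (q_k)_{k∈ℕ} be its sequence of best simultaneous Diophantine approximation denominators. Then ω̂_α = sup{ν > 0 : limsup_{k→∞} q_{k+1}^ν·⟨q_k·α⟩ < ∞}. In particular, for any ω < ω̂_α the sequence (q_{k+1}^ω·⟨q_k·α⟩)_{k∈ℕ} is bounded. -/

import Mathlib

open MeasureTheory Matrix Filter
open scoped ENNReal

noncomputable section

abbrev SLR (n : ℕ) := Matrix.SpecialLinearGroup (Fin n) ℝ
abbrev SLZ (n : ℕ) := Matrix.SpecialLinearGroup (Fin n) ℤ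

instance SLRTop (n : ℕ) : TopologicalSpace (SLR n) :=
  inferInstanceAs (TopologicalSpace {A : Matrix (Fin n) (Fin n) ℝ // A.det = 1})

def ιR (n : ℕ) : SLZ n →* SLR n := Matrix.SpecialLinearGroup.map (Int.castRingHom ℝ)

def SLZsub (n : ℕ) : Subgroup (SLR n) := (ιR n).range

def en (n : ℕ) : Fin n → ℤ := fun i => if (i : ℕ) = n - 1 then 1 else 0
def enR (n : ℕ) : Fin n → ℝ := fun i => if (i : ℕ) = n - 1 then 1 else 0
def enM (n q : ℕ) : Fin n → ZMod q := fun i => if (i : ℕ) = n - 1 then 1 else 0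

def ιM (n q : ℕ) : SLZ n →* Matrix.SpecialLinearGroup (Fin n) (ZMod q) :=
  Matrix.SpecialLinearGroup.map (Int.castRingHom (ZMod q))

def Gamma1 (n q : ℕ) : Subgroup (SLZ n) where
  carrier := {γ | Matrix.vecMul (enM n q) ((ιM n q γ : Matrix.SpecialLinearGroup (Fin n) (ZMod q)) : Matrix (Fin n) (Fin n) (ZMod q)) = enM n q}
  one_mem' := by simp
  mul_mem' := by
    intro a b ha hb
    have ha' : Matrix.vecMul (enM n q) ((ιM n q a : Matrix.SpecialLinearGroup (Fin n) (ZMod q)) : Matrix (Fin n) (Fin n) (ZMod q)) = enM n q := ha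
    have hb' : Matrix.vecMul (enM n q) ((ιM n q b : Matrix.SpecialLinearGroup (Fin n) (ZMod q)) : Matrix (Fin n) (Fin n) (ZMod q)) = enM n q := hb
    show Matrix.vecMul (enM n q) ((ιM n q (a * b) : Matrix.SpecialLinearGroup (Fin n) (ZMod q)) : Matrix (Fin n) (Fin n) (ZMod q)) = enM n q
    rw [_root_.map_mul, Matrix.SpecialLinearGroup.coe_mul, ← Matrix.vecMul_vecMul, ha', hb']
  inv_mem' := by
    intro a ha
    have ha' : Matrix.vecMul (enM n q) ((ιM n q a : Matrix.SpecialLinearGroup (Fin n) (ZMod q)) : Matrix (Fin n) (Fin n) (ZMod q)) = enM n q := ha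
    show Matrix.vecMul (enM n q) ((ιM n q a⁻¹ : Matrix.SpecialLinearGroup (Fin n) (ZMod q)) : Matrix (Fin n) (Fin n) (ZMod q)) = enM n q
    rw [_root_.map_inv]
    have key : ((ιM n q a : Matrix.SpecialLinearGroup (Fin n) (ZMod q)) : Matrix (Fin n) (Fin n) (ZMod q)) *
        (((ιM n q a)⁻¹ : Matrix.SpecialLinearGroup (Fin n) (ZMod q)) : Matrix (Fin n) (Fin n) (ZMod q)) = 1 := by
      rw [← Matrix.SpecialLinearGroup.coe_mul, mul_inv_cancel]
      simp
    calc Matrix.vecMul (enM n q) (((ιM n q a)⁻¹ : Matrix.SpecialLinearGroup (Fin n) (ZMod q)) : Matrix (Fin n) (Fin n) (ZMod q))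
        = Matrix.vecMul (Matrix.vecMul (enM n q) ((ιM n q a : Matrix.SpecialLinearGroup (Fin n) (ZMod q)) : Matrix (Fin n) (Fin n) (ZMod q))) (((ιM n q a)⁻¹ : Matrix.SpecialLinearGroup (Fin n) (ZMod q)) : Matrix (Fin n) (Fin n) (ZMod q)) := by rw [ha']
      _ = Matrix.vecMul (enM n q) (((ιM n q a : Matrix.SpecialLinearGroup (Fin n) (ZMod q)) : Matrix (Fin n) (Fin n) (ZMod q)) * (((ιM n q a)⁻¹ : Matrix.SpecialLinearGroup (Fin n) (ZMod q)) : Matrix (Fin n) (Fin n) (ZMod q))) := Matrix.vecMul_vecMul _ _ _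
      _ = enM n q := by rw [key, Matrix.vecMul_one]

def LZ (n : ℕ) : Subgroup (SLZ n) where
  carrier := {γ | Matrix.vecMul (en n) ((γ : SLZ n) : Matrix (Fin n) (Fin n) ℤ) = en n}
  one_mem' := by simp
  mul_mem' := by
    intro a b ha hb
    have ha' : Matrix.vecMul (en n) ((a : SLZ n) : Matrix (Fin n) (Fin n) ℤ) = en n := ha
    have hb' : Matrix.vecMul (en n) ((b : SLZ n) : Matrix (Fin n) (Fin n) ℤ) = en n := hb
    show Matrix.vecMul (en n) ((a * b : SLZ n) : Matrix (Fin n) (Fin n) ℤ) = en n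
    rw [Matrix.SpecialLinearGroup.coe_mul, ← Matrix.vecMul_vecMul, ha', hb']
  inv_mem' := by
    intro a ha
    have ha' : Matrix.vecMul (en n) ((a : SLZ n) : Matrix (Fin n) (Fin n) ℤ) = en n := ha
    show Matrix.vecMul (en n) ((a⁻¹ : SLZ n) : Matrix (Fin n) (Fin n) ℤ) = en n
    have key : ((a : Matrix (Fin n) (Fin n) ℤ)) * ((a⁻¹ : SLZ n) : Matrix (Fin n) (Fin n) ℤ) = 1 := by
      rw [← Matrix.SpecialLinearGroup.coe_mul, mul_inv_cancel]
      simp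
    calc Matrix.vecMul (en n) ((a⁻¹ : SLZ n) : Matrix (Fin n) (Fin n) ℤ)
        = Matrix.vecMul (Matrix.vecMul (en n) (a : Matrix (Fin n) (Fin n) ℤ)) ((a⁻¹ : SLZ n) : Matrix (Fin n) (Fin n) ℤ) := by rw [ha']
      _ = Matrix.vecMul (en n) ((a : Matrix (Fin n) (Fin n) ℤ) * ((a⁻¹ : SLZ n) : Matrix (Fin n) (Fin n) ℤ)) := Matrix.vecMul_vecMul _ _ _
      _ = en n := by rw [key, Matrix.vecMul_one]

/-- The map from the coset space `(Γ ∩ L_n)\Γ` to `ℤⁿ` induced by `γ ↦ e_n·γ`. -/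
def cosetVec (n : ℕ) (Γ : Subgroup (SLZ n)) :
    Quotient (QuotientGroup.rightRel ((LZ n).subgroupOf Γ)) → (Fin n → ℤ) :=
  fun c => Quotient.liftOn c
    (fun γ => Matrix.vecMul (en n) (((γ : Γ) : SLZ n) : Matrix (Fin n) (Fin n) ℤ))
    (by
      intro a b hab
      have hab' : (b * a⁻¹ : Γ) ∈ (LZ n).subgroupOf Γ := QuotientGroup.rightRel_apply.mp hab
      have h : Matrix.vecMul (en n) (((b * a⁻¹ : Γ) : SLZ n) : Matrix (Fin n) (Fin n) ℤ) = en n :=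
        Subgroup.mem_subgroupOf.mp hab'
      show Matrix.vecMul (en n) (((a : Γ) : SLZ n) : Matrix (Fin n) (Fin n) ℤ)
          = Matrix.vecMul (en n) (((b : Γ) : SLZ n) : Matrix (Fin n) (Fin n) ℤ)
      have hb : (((b : Γ) : SLZ n) : Matrix (Fin n) (Fin n) ℤ)
          = (((b * a⁻¹ : Γ) : SLZ n) : Matrix (Fin n) (Fin n) ℤ) * (((a : Γ) : SLZ n) : Matrix (Fin n) (Fin n) ℤ) := by
        rw [← Matrix.SpecialLinearGroup.coe_mul]
        congr 1
        simp only [Subgroup.coe_mul, InvMemClass.coe_inv]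
        group
        all_goals rfl
      rw [hb, ← Matrix.vecMul_vecMul, h])

/-- The incomplete Eisenstein series `Θ_f^Γ`: the sum of `f(e_n·γ·g)` over the
coset space `(Γ ∩ L_n)\Γ`. -/
def Theta (n : ℕ) (Γ : Subgroup (SLZ n)) (f : (Fin n → ℝ) → ℂ) (g : SLR n) : ℂ :=
  ∑' c : Quotient (QuotientGroup.rightRel ((LZ n).subgroupOf Γ)),
    f (Matrix.vecMul (fun i => ((cosetVec n Γ c) i : ℝ)) (g : Matrix (Fin n) (Fin n) ℝ))
/-- The real stabilizer `L_n ≤ SL_n(ℝ)` of `e_n`. -/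
def LR (n : ℕ) : Subgroup (SLR n) where
  carrier := {g | Matrix.vecMul (enR n) ((g : SLR n) : Matrix (Fin n) (Fin n) ℝ) = enR n}
  one_mem' := by simp
  mul_mem' := by
    intro a b ha hb
    have ha' : Matrix.vecMul (enR n) ((a : SLR n) : Matrix (Fin n) (Fin n) ℝ) = enR n := ha
    have hb' : Matrix.vecMul (enR n) ((b : SLR n) : Matrix (Fin n) (Fin n) ℝ) = enR n := hb
    show Matrix.vecMul (enR n) ((a * b : SLR n) : Matrix (Fin n) (Fin n) ℝ) = enR n
    rw [Matrix.SpecialLinearGroup.coe_mul, ← Matrix.vecMul_vecMul, ha', hb']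
  inv_mem' := by
    intro a ha
    have ha' : Matrix.vecMul (enR n) ((a : SLR n) : Matrix (Fin n) (Fin n) ℝ) = enR n := ha
    show Matrix.vecMul (enR n) ((a⁻¹ : SLR n) : Matrix (Fin n) (Fin n) ℝ) = enR n
    have key : ((a : Matrix (Fin n) (Fin n) ℝ)) * ((a⁻¹ : SLR n) : Matrix (Fin n) (Fin n) ℝ) = 1 := by
      rw [← Matrix.SpecialLinearGroup.coe_mul, mul_inv_cancel]; simp
    calc Matrix.vecMul (enR n) ((a⁻¹ : SLR n) : Matrix (Fin n) (Fin n) ℝ)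
        = Matrix.vecMul (Matrix.vecMul (enR n) (a : Matrix (Fin n) (Fin n) ℝ)) ((a⁻¹ : SLR n) : Matrix (Fin n) (Fin n) ℝ) := by rw [ha']
      _ = Matrix.vecMul (enR n) ((a : Matrix (Fin n) (Fin n) ℝ) * ((a⁻¹ : SLR n) : Matrix (Fin n) (Fin n) ℝ)) := Matrix.vecMul_vecMul _ _ _
      _ = enR n := by rw [key, Matrix.vecMul_one]

/-- The identity component `P_n ≤ SL_n(ℝ)` of the maximal parabolic subgroup fixing the
line spanned by `e_n`: those `g` with `e_n·g = c·e_n` for some `c > 0`. -/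
def PR (n : ℕ) : Subgroup (SLR n) where
  carrier := {g | ∃ c : ℝ, 0 < c ∧
    Matrix.vecMul (enR n) ((g : SLR n) : Matrix (Fin n) (Fin n) ℝ) = c • enR n}
  one_mem' := ⟨1, one_pos, by simp⟩
  mul_mem' := by
    rintro a b ⟨c, hc, hca⟩ ⟨d, hd, hdb⟩
    refine ⟨c * d, mul_pos hc hd, ?_⟩
    show Matrix.vecMul (enR n) ((a * b : SLR n) : Matrix (Fin n) (Fin n) ℝ) = (c * d) • enR n
    rw [Matrix.SpecialLinearGroup.coe_mul, ← Matrix.vecMul_vecMul, hca,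
      Matrix.smul_vecMul, hdb, smul_smul]
  inv_mem' := by
    rintro a ⟨c, hc, hca⟩
    refine ⟨c⁻¹, inv_pos.mpr hc, ?_⟩
    show Matrix.vecMul (enR n) ((a⁻¹ : SLR n) : Matrix (Fin n) (Fin n) ℝ) = c⁻¹ • enR n
    have key : ((a : Matrix (Fin n) (Fin n) ℝ)) * ((a⁻¹ : SLR n) : Matrix (Fin n) (Fin n) ℝ) = 1 := by
      rw [← Matrix.SpecialLinearGroup.coe_mul, mul_inv_cancel]; simp
    have h2 : c • Matrix.vecMul (enR n) ((a⁻¹ : SLR n) : Matrix (Fin n) (Fin n) ℝ) = enR n := by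
      rw [← Matrix.smul_vecMul, ← hca, Matrix.vecMul_vecMul, key, Matrix.vecMul_one]
    have h3 := congrArg (fun w => c⁻¹ • w) h2
    simpa [smul_smul, inv_mul_cancel₀ (ne_of_gt hc)] using h3
/-- The Euclidean norm on `ℝⁿ`. -/
def eNorm (n : ℕ) (v : Fin n → ℝ) : ℝ := Real.sqrt (∑ i : Fin n, (v i) ^ 2)

/-- The standard quadratic form `Q₀` of signature `(p₁, n − p₁)`. -/
def Q0 (n p₁ : ℕ) (v : Fin n → ℝ) : ℝ := ∑ i : Fin n, if (i : ℕ) < p₁ then (v i) ^ 2 else -((v i) ^ 2)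

/-- The Riemann zeta value `ζ(n) = Σ_{k ≥ 1} k⁻ⁿ`. -/
def zetaN (n : ℕ) : ℝ := ∑' k : {k : ℕ // 0 < k}, ((k.1 : ℝ))⁻¹ ^ n

/-- `ζ_q(n) = Σ_{k ≥ 1, gcd(k,q) = 1} k⁻ⁿ`. -/
def zetaCop (q n : ℕ) : ℝ := ∑' k : {k : ℕ // 0 < k ∧ Nat.Coprime k q}, ((k.1 : ℝ))⁻¹ ^ n

/-- The Siegel transform `f̂(Λ) = Σ_{v ∈ Λ∖{0}} f(v)`. -/
def Siegel (n : ℕ) (f : (Fin n → ℝ) → ℂ) (Λ : Set (Fin n → ℝ)) : ℂ :=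
  ∑' v : {x : Fin n → ℝ // x ∈ Λ ∧ x ≠ 0}, f v

/-- The affine lattice `(ℤⁿ + α)·g` (row vector action). -/
def affLat (n : ℕ) (α : Fin n → ℝ) (g : SLR n) : Set (Fin n → ℝ) :=
  {x | ∃ v : Fin n → ℤ, x = Matrix.vecMul (fun i => (v i : ℝ) + α i) ((g : SLR n) : Matrix (Fin n) (Fin n) ℝ)}

/-- The number of points of `Λ` in `A`, valued in `ℝ≥0∞`. -/
def latCount (n : ℕ) (Λ A : Set (Fin n → ℝ)) : ℝ≥0∞ := ∑' _ : ↥(Λ ∩ A), (1 : ℝ≥0∞)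

/-- The discrepancy `D(Λ,A) = |#(Λ∩A) − vol(A)|`, valued in `ℝ≥0∞`. -/
def disc (n : ℕ) (Λ A : Set (Fin n → ℝ)) : ℝ≥0∞ :=
  (latCount n Λ A - volume A) + (volume A - latCount n Λ A)

/-- `⟨α⟩`: the sup-norm distance from `α` to `ℤⁿ`. -/
def distZ (n : ℕ) (α : Fin n → ℝ) : ℝ := ⨅ v : Fin n → ℤ, ‖α - fun i => (v i : ℝ)‖

/-- `m` is a best simultaneous Diophantine approximation denominator of `α`. -/
def IsBestDenom (n : ℕ) (α : Fin n → ℝ) (m : ℕ) : Prop :=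
  0 < m ∧ ∀ l : ℕ, 1 ≤ l → l < m →
    distZ n (fun i => (m : ℝ) * α i) < distZ n (fun i => (l : ℝ) * α i)

/-- The defining set of the Diophantine exponent `ω_α`. -/
def omegaSet (n : ℕ) (α : Fin n → ℝ) : Set ℝ :=
  {ν | 0 < ν ∧ ∀ T : ℝ, ∃ t : ℝ, T < t ∧ ∃ m : ℤ, m ≠ 0 ∧ |(m : ℝ)| < t ∧
    distZ n (fun i => (m : ℝ) * α i) < t ^ (-ν)}

/-- The defining set of the uniform Diophantine exponent `ω̂_α`. -/
def omegaHatSet (n : ℕ) (α : Fin n → ℝ) : Set ℝ :=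
  {ν | 0 < ν ∧ ∃ T : ℝ, ∀ t : ℝ, T ≤ t → ∃ m : ℤ, m ≠ 0 ∧ |(m : ℝ)| < t ∧
    distZ n (fun i => (m : ℝ) * α i) < t ^ (-ν)}

/-- The Diophantine exponent `ω_α`. -/
def dioExp (n : ℕ) (α : Fin n → ℝ) : ℝ := sSup (omegaSet n α)

/-- The uniform Diophantine exponent `ω̂_α`. -/
def dioExpHat (n : ℕ) (α : Fin n → ℝ) : ℝ := sSup (omegaHatSet n α)

/-- `α ∈ ℝⁿ` is an irrational vector, i.e. `α ∉ ℚⁿ`. -/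
def IsIrrationalVec (n : ℕ) (α : Fin n → ℝ) : Prop := ∀ v : Fin n → ℚ, α ≠ fun i => (v i : ℝ)

/-- The open Euclidean ball `B_t` of radius `t` centered at the origin. -/
def ball0 (n : ℕ) (t : ℝ) : Set (Fin n → ℝ) := {v | eNorm n v < t}
lemma distZ_nonneg (n : ℕ) (β : Fin n → ℝ) : 0 ≤ distZ n β :=
  Real.iInf_nonneg fun _ => norm_nonneg _

lemma distZ_bddBelow (n : ℕ) (β : Fin n → ℝ) :
    BddBelow (Set.range fun v : Fin n → ℤ => ‖β - fun i => (v i : ℝ)‖) :=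
  ⟨0, by rintro x ⟨v, rfl⟩; exact norm_nonneg _⟩

lemma distZ_neg (n : ℕ) (β : Fin n → ℝ) : distZ n (-β) = distZ n β := by
  unfold distZ
  apply le_antisymm
  · refine le_ciInf fun v => ?_
    refine (ciInf_le (distZ_bddBelow n _) (-v)).trans_eq ?_
    rw [show (-β) - (fun i => ((-v) i : ℝ)) = -(β - fun i => (v i : ℝ)) by
      funext i; simp; ring, norm_neg]
  · refine le_ciInf fun v => ?_
    refine (ciInf_le (distZ_bddBelow n _) (-v)).trans_eq ?_
    rw [show β - (fun i => ((-v) i : ℝ)) = -((-β) - fun i => (v i : ℝ)) by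
      funext i; simp; ring, norm_neg]

lemma distZ_int_natAbs (n : ℕ) (α : Fin n → ℝ) (m : ℤ) :
    distZ n (fun i => ((m.natAbs : ℕ) : ℝ) * α i) = distZ n (fun i => (m : ℝ) * α i) := by
  rcases le_or_gt 0 m with h | h
  · congr 1; funext i
    rw [Nat.cast_natAbs, abs_of_nonneg (by exact_mod_cast h)]
  · have heq : (fun i => ((m.natAbs : ℕ) : ℝ) * α i) = -fun i => (m : ℝ) * α i := by
      funext i; rw [Nat.cast_natAbs, abs_of_neg (by exact_mod_cast h)]; simp
    rw [heq, distZ_neg]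

lemma keyLemma (n : ℕ) (α : Fin n → ℝ) (qk : ℕ → ℕ) (hmono : StrictMono qk)
    (hbest : ∀ k, IsBestDenom n α (qk k))
    (hall : ∀ m : ℕ, IsBestDenom n α m → ∃ k, qk k = m)
    (k l : ℕ) (hl1 : 1 ≤ l) (hl2 : l < qk (k + 1)) :
    distZ n (fun i => (qk k : ℝ) * α i) ≤ distZ n (fun i => (l : ℝ) * α i) := by
  classical
  set D : ℕ → ℝ := fun m => distZ n (fun i => (m : ℝ) * α i) with hD
  have hne : (Finset.Icc 1 l).Nonempty := ⟨l, by simp [hl1]⟩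
  set d := (Finset.Icc 1 l).inf' hne D with hd
  obtain ⟨m₀, hm₀mem, hm₀⟩ := Finset.exists_mem_eq_inf' hne D
  have hex : ∃ m, m ∈ Finset.Icc 1 l ∧ D m = d := ⟨m₀, hm₀mem, hm₀.symm⟩
  set m₁ := Nat.find hex with hm₁
  obtain ⟨hmem, hval⟩ := Nat.find_spec hex
  have h1 : 1 ≤ m₁ := (Finset.mem_Icc.mp hmem).1
  have h2 : m₁ ≤ l := (Finset.mem_Icc.mp hmem).2
  have hbest₁ : IsBestDenom n α m₁ := by
    refine ⟨h1, fun j hj1 hj2 => ?_⟩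
    have hjmem : j ∈ Finset.Icc 1 l := Finset.mem_Icc.mpr ⟨hj1, le_trans hj2.le h2⟩
    have hjge : d ≤ D j := Finset.inf'_le D hjmem
    have hjne : D j ≠ d := fun heq => (Nat.find_min hex hj2) ⟨hjmem, heq⟩
    calc D m₁ = d := hval
    _ < D j := lt_of_le_of_ne hjge (Ne.symm hjne)
  obtain ⟨j, hj⟩ := hall m₁ hbest₁
  have hjk : j ≤ k := by
    have : qk j < qk (k + 1) := by rw [hj]; exact lt_of_le_of_lt h2 hl2
    exact Nat.lt_succ_iff.mp (hmono.lt_iff_lt.mp this)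
  have hDk : D (qk k) ≤ D (qk j) := by
    rcases eq_or_lt_of_le hjk with rfl | h
    · exact le_refl _
    · exact ((hbest k).2 (qk j) (hbest j).1 (hmono h)).le
  calc D (qk k) ≤ D (qk j) := hDk
  _ = d := by rw [hj, hval]
  _ ≤ D l := Finset.inf'_le D (Finset.mem_Icc.mpr ⟨hl1, le_refl l⟩)

lemma evA (n : ℕ) (α : Fin n → ℝ) (qk : ℕ → ℕ) (hmono : StrictMono qk)
    (hbest : ∀ k, IsBestDenom n α (qk k))
    (hall : ∀ m : ℕ, IsBestDenom n α m → ∃ k, qk k = m)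
    (ν : ℝ) (hν : ν ∈ omegaHatSet n α) :
    ∀ᶠ k in atTop, (qk (k + 1) : ℝ) ^ ν * distZ n (fun i => (qk k : ℝ) * α i) < 1 := by
  obtain ⟨hν0, T, hT⟩ := hν
  rw [eventually_atTop]
  refine ⟨⌈T⌉₊, fun k hk => ?_⟩
  have hq1 : 1 ≤ qk (k + 1) := (hbest (k + 1)).1
  have hqk1 : k + 1 ≤ qk (k + 1) := hmono.le_apply
  have hqT : T ≤ (qk (k + 1) : ℝ) := by
    calc T ≤ (⌈T⌉₊ : ℝ) := Nat.le_ceil T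
    _ ≤ (qk (k + 1) : ℝ) := by
      have : ⌈T⌉₊ ≤ qk (k + 1) := le_trans (le_trans hk (Nat.le_succ k)) hqk1
      exact_mod_cast this
  obtain ⟨m, hm0, hmlt, hmd⟩ := hT _ hqT
  have habs : 1 ≤ m.natAbs := Int.natAbs_pos.mpr hm0
  have habs2 : m.natAbs < qk (k + 1) := by
    have h' : ((m.natAbs : ℕ) : ℝ) < (qk (k + 1) : ℝ) := by
      rw [Nat.cast_natAbs, Int.cast_abs]; exact hmlt
    exact_mod_cast h'
  have hkey := keyLemma n α qk hmono hbest hall k m.natAbs habs habs2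
  rw [distZ_int_natAbs] at hkey
  have hlt : distZ n (fun i => (qk k : ℝ) * α i) < (qk (k + 1) : ℝ) ^ (-ν) :=
    lt_of_le_of_lt hkey hmd
  have hqpos : (0 : ℝ) < (qk (k + 1) : ℝ) := by exact_mod_cast hq1
  have hrp : (0 : ℝ) < (qk (k + 1) : ℝ) ^ ν := Real.rpow_pos_of_pos hqpos ν
  calc (qk (k + 1) : ℝ) ^ ν * distZ n (fun i => (qk k : ℝ) * α i)
      < (qk (k + 1) : ℝ) ^ ν * (qk (k + 1) : ℝ) ^ (-ν) := mul_lt_mul_of_pos_left hlt hrp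
  _ = 1 := by rw [← Real.rpow_add hqpos]; simp

lemma memOmegaHat (n : ℕ) (α : Fin n → ℝ) (qk : ℕ → ℕ) (hmono : StrictMono qk)
    (hbest : ∀ k, IsBestDenom n α (qk k))
    (ν ν' : ℝ) (hν0 : 0 < ν) (hν'0 : 0 < ν') (hν'ν : ν' < ν)
    (hνtop : Filter.limsup (fun k =>
        ENNReal.ofReal ((qk (k + 1) : ℝ) ^ ν * distZ n (fun i => (qk k : ℝ) * α i)))
      Filter.atTop < ⊤) :
    ν' ∈ omegaHatSet n α := by
  classical
  set u : ℕ → ℝ≥0∞ := fun k =>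
    ENNReal.ofReal ((qk (k + 1) : ℝ) ^ ν * distZ n (fun i => (qk k : ℝ) * α i)) with hu
  set b : ℝ≥0∞ := Filter.limsup u Filter.atTop + 1 with hb
  have hbne : b ≠ ⊤ := ENNReal.add_ne_top.mpr ⟨hνtop.ne, ENNReal.one_ne_top⟩
  have hlt : Filter.limsup u Filter.atTop < b := ENNReal.lt_add_right hνtop.ne one_ne_zero
  have hev := Filter.eventually_lt_of_limsup_lt hlt
  obtain ⟨k₀, hk₀⟩ := eventually_atTop.mp hev
  set C : ℝ := b.toReal with hC
  have hC0 : 0 ≤ C := ENNReal.toReal_nonneg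
  have hqpos : ∀ j, (0 : ℝ) < (qk j : ℝ) := fun j => by exact_mod_cast (hbest j).1
  have hbound : ∀ k, k₀ ≤ k →
      distZ n (fun i => (qk k : ℝ) * α i) ≤ C * (qk (k + 1) : ℝ) ^ (-ν) := by
    intro k hk
    have h1 : (qk (k + 1) : ℝ) ^ ν * distZ n (fun i => (qk k : ℝ) * α i) ≤ C := by
      have := (hk₀ k hk).le
      rw [hu] at this
      exact (ENNReal.ofReal_le_iff_le_toReal hbne).mp this
    have hrp : (0 : ℝ) < (qk (k + 1) : ℝ) ^ ν := Real.rpow_pos_of_pos (hqpos _) ν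
    have h2 := mul_le_mul_of_nonneg_left h1 (le_of_lt (Real.rpow_pos_of_pos (hqpos (k + 1)) (-ν)))
    calc distZ n (fun i => (qk k : ℝ) * α i)
        = (qk (k + 1) : ℝ) ^ (-ν) * ((qk (k + 1) : ℝ) ^ ν * distZ n (fun i => (qk k : ℝ) * α i)) := by
          rw [← mul_assoc, ← Real.rpow_add (hqpos _)]; simp
    _ ≤ (qk (k + 1) : ℝ) ^ (-ν) * C := h2
    _ = C * (qk (k + 1) : ℝ) ^ (-ν) := mul_comm _ _
  set δ : ℝ := ν - ν' with hδdef
  have hδ : 0 < δ := sub_pos.mpr hν'ν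
  set M : ℝ := max C 1 with hM
  have hM1 : (1 : ℝ) ≤ M := le_max_right C 1
  have hM0 : (0 : ℝ) ≤ M := le_trans zero_le_one hM1
  refine ⟨hν'0, max ((qk (k₀ + 1) : ℝ) + 1) (M ^ (1 / δ) + 1), fun t ht => ?_⟩
  have ht1 : (qk (k₀ + 1) : ℝ) + 1 ≤ t := le_trans (le_max_left _ _) ht
  have ht2 : M ^ (1 / δ) + 1 ≤ t := le_trans (le_max_right _ _) ht
  have htpos : (0 : ℝ) < t := lt_of_lt_of_le (by positivity) ht1
  -- find k with qk k < t ≤ qk (k+1)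
  have hexj : ∃ j, t ≤ (qk (j + 1) : ℝ) := by
    refine ⟨⌈t⌉₊, ?_⟩
    calc t ≤ (⌈t⌉₊ : ℝ) := Nat.le_ceil t
    _ ≤ ((qk (⌈t⌉₊ + 1)) : ℝ) := by
        exact_mod_cast le_trans (Nat.le_succ _) hmono.le_apply
  set k := Nat.find hexj with hk
  have hk2 : t ≤ (qk (k + 1) : ℝ) := Nat.find_spec hexj
  have hk1 : (qk k : ℝ) < t := by
    rcases Nat.eq_zero_or_pos k with h0 | h0
    · rw [h0]
      have : (qk 0 : ℝ) ≤ (qk (k₀ + 1) : ℝ) := by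
        exact_mod_cast hmono.monotone (Nat.zero_le _)
      linarith
    · have hfm := Nat.find_min hexj (show k - 1 < k by omega)
      push_neg at hfm
      rwa [show k - 1 + 1 = k by omega] at hfm
  have hkk₀ : k₀ ≤ k := by
    by_contra h
    push_neg at h
    have h1 : qk (k + 1) ≤ qk (k₀ + 1) := hmono.monotone (Nat.succ_le_succ h.le)
    have h2 : ((qk (k + 1)) : ℝ) ≤ (qk (k₀ + 1) : ℝ) := by exact_mod_cast h1
    linarith
  refine ⟨(qk k : ℤ), by exact_mod_cast (hbest k).1.ne', ?_, ?_⟩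
  · rw [show (((qk k : ℤ) : ℝ)) = ((qk k : ℕ) : ℝ) by push_cast; ring,
      abs_of_nonneg (le_of_lt (hqpos k))]
    exact hk1
  · have hcast : (fun i => (((qk k : ℤ)) : ℝ) * α i) = fun i => ((qk k : ℕ) : ℝ) * α i := by
      funext i; push_cast; ring
    rw [hcast]
    have h1 := hbound k hkk₀
    have h2 : (qk (k + 1) : ℝ) ^ (-ν) ≤ t ^ (-ν) := by
      rw [Real.rpow_neg (le_of_lt (hqpos _)), Real.rpow_neg htpos.le]
      exact inv_anti₀ (Real.rpow_pos_of_pos htpos ν)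
        (Real.rpow_le_rpow htpos.le hk2 hν0.le)
    have h3 : C < t ^ δ := by
      have hMlt : M ^ (1 / δ) < t := by linarith
      have h4 := Real.rpow_lt_rpow (Real.rpow_nonneg hM0 _) hMlt hδ
      rw [← Real.rpow_mul hM0, one_div_mul_cancel hδ.ne', Real.rpow_one] at h4
      exact lt_of_le_of_lt (le_max_left C 1) h4
    calc distZ n (fun i => ((qk k : ℕ) : ℝ) * α i)
        ≤ C * (qk (k + 1) : ℝ) ^ (-ν) := h1
    _ ≤ C * t ^ (-ν) := mul_le_mul_of_nonneg_left h2 hC0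
    _ < t ^ δ * t ^ (-ν) := mul_lt_mul_of_pos_right h3 (Real.rpow_pos_of_pos htpos _)
    _ = t ^ (-ν') := by rw [← Real.rpow_add htpos]; congr 1; rw [hδdef]; ring

/-- Lemma 5.2 of the paper: characterization of the uniform Diophantine
exponent `ω̂_α` in terms of the sequence of best approximation denominators; in particular,
for every `ω < ω̂_α` the sequence `q_{k+1}^ω·⟨q_k α⟩` is bounded. -/
theorem statement19 (n : ℕ) (α : Fin n → ℝ) (hirr : IsIrrationalVec n α)
    (qk : ℕ → ℕ) (hmono : StrictMono qk) (hbest : ∀ k, IsBestDenom n α (qk k))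
    (hall : ∀ m : ℕ, IsBestDenom n α m → ∃ k, qk k = m) :
    dioExpHat n α = sSup {ν : ℝ | 0 < ν ∧
      Filter.limsup (fun k =>
          ENNReal.ofReal ((qk (k + 1) : ℝ) ^ ν * distZ n (fun i => (qk k : ℝ) * α i)))
        Filter.atTop < ⊤} ∧
    ∀ ω : ℝ, 0 < ω → ω < dioExpHat n α →
      ∃ C : ℝ, ∀ k : ℕ, (qk (k + 1) : ℝ) ^ ω * distZ n (fun i => (qk k : ℝ) * α i) ≤ C := by
  classical
  set S : Set ℝ := {ν : ℝ | 0 < ν ∧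
      Filter.limsup (fun k =>
          ENNReal.ofReal ((qk (k + 1) : ℝ) ^ ν * distZ n (fun i => (qk k : ℝ) * α i)))
        Filter.atTop < ⊤} with hSdef
  have hA : omegaHatSet n α ⊆ S := by
    intro ν hν
    refine ⟨hν.1, ?_⟩
    have hev : ∀ᶠ k in atTop,
        ENNReal.ofReal ((qk (k + 1) : ℝ) ^ ν * distZ n (fun i => (qk k : ℝ) * α i))
          ≤ (1 : ℝ≥0∞) := by
      filter_upwards [evA n α qk hmono hbest hall ν hν] with k hk
      exact ENNReal.ofReal_le_one.mpr hk.le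
    exact lt_of_le_of_lt (Filter.limsup_le_of_le (by isBoundedDefault) hev) ENNReal.one_lt_top
  have hB : ∀ ν ∈ S, ∀ ν' : ℝ, 0 < ν' → ν' < ν → ν' ∈ omegaHatSet n α := by
    rintro ν ⟨hν0, hνtop⟩ ν' hν'0 hν'ν
    exact memOmegaHat n α qk hmono hbest ν ν' hν0 hν'0 hν'ν hνtop
  constructor
  · unfold dioExpHat
    by_cases hSne : S.Nonempty
    · by_cases hSbdd : BddAbove S
      · have hObdd : BddAbove (omegaHatSet n α) := hSbdd.mono hA
        obtain ⟨ν, hν⟩ := hSne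
        have hν0 : 0 < ν := hν.1
        have hOmem : ν / 2 ∈ omegaHatSet n α := hB ν hν (ν / 2) (by linarith) (by linarith)
        have hOne : (omegaHatSet n α).Nonempty := ⟨ν / 2, hOmem⟩
        apply le_antisymm
        · exact csSup_le_csSup hSbdd hOne hA
        · refine Real.sSup_le (fun x hx => ?_) (Real.sSup_nonneg fun y hy => hy.1.le)
          refine le_of_forall_pos_le_add fun ε hε => ?_
          rcases le_or_gt (x - ε) (ν / 2) with h | h
          · have h2 : ν / 2 ≤ sSup (omegaHatSet n α) := le_csSup hObdd hOmem
            linarith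
          · have hmem : x - ε ∈ omegaHatSet n α :=
              hB x hx (x - ε) (by linarith) (by linarith)
            have h2 : x - ε ≤ sSup (omegaHatSet n α) := le_csSup hObdd hmem
            linarith
      · -- S unbounded
        have hOunbdd : ¬ BddAbove (omegaHatSet n α) := by
          rintro ⟨M, hM⟩
          apply hSbdd
          refine ⟨2 * max M 1, fun ν hν => ?_⟩
          by_contra hgt
          push_neg at hgt
          have h1 : (0 : ℝ) < ν / 2 := by
            have := hν.1; linarith [le_max_right M 1, le_max_left M 1]
          have h2 : ν / 2 ∈ omegaHatSet n α := hB ν hν (ν / 2) h1 (by linarith)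
          have h3 : ν / 2 ≤ M := hM h2
          linarith [le_max_right M 1, le_max_left M 1]
        rw [Real.sSup_of_not_bddAbove hOunbdd, Real.sSup_of_not_bddAbove hSbdd]
    · -- S nonempty is false
      have hOempty : omegaHatSet n α = ∅ := by
        rw [← Set.not_nonempty_iff_eq_empty]
        intro ⟨ν, hν⟩
        exact hSne ⟨ν, hA hν⟩
      rw [Set.not_nonempty_iff_eq_empty] at hSne
      rw [hOempty, hSne]
  · intro ω hω0 hωs
    have hOne : (omegaHatSet n α).Nonempty := by
      by_contra h
      rw [Set.not_nonempty_iff_eq_empty] at h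
      unfold dioExpHat at hωs
      rw [h, Real.sSup_empty] at hωs
      linarith
    obtain ⟨ν, hνmem, hων⟩ := exists_lt_of_lt_csSup hOne hωs
    obtain ⟨K, hK⟩ := eventually_atTop.mp (evA n α qk hmono hbest hall ν hνmem)
    set g : ℕ → ℝ := fun k => (qk (k + 1) : ℝ) ^ ω * distZ n (fun i => (qk k : ℝ) * α i)
      with hg
    have hrange : (Finset.range (K + 1)).Nonempty := ⟨0, by simp⟩
    refine ⟨max 1 ((Finset.range (K + 1)).sup' hrange g), fun k => ?_⟩
    rcases le_or_gt k K with h | h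
    · exact le_max_of_le_right (Finset.le_sup' g (Finset.mem_range.mpr (Nat.lt_succ_of_le h)))
    · refine le_max_of_le_left ?_
      have h1 := hK k h.le
      have hq1 : (1 : ℝ) ≤ (qk (k + 1) : ℝ) := by exact_mod_cast (hbest (k + 1)).1
      have h2 : (qk (k + 1) : ℝ) ^ ω ≤ (qk (k + 1) : ℝ) ^ ν :=
        Real.rpow_le_rpow_of_exponent_le hq1 hων.le
      calc g k ≤ (qk (k + 1) : ℝ) ^ ν * distZ n (fun i => (qk k : ℝ) * α i) :=
            mul_le_mul_of_nonneg_right h2 (distZ_nonneg _ _)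
      _ ≤ 1 := h1.le
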